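/- Let Σ = BΩBᵀ + Δ as above, w the long-only minimum variance portfolio, K = {i : w_i > 0}, and h = Ω(B^K)ᵀ(Σ^K)⁻¹1_k. Then for every i ∉ K, B_i · h ≥ 1. Combined with the previous statement: w_i > 0 if and only if B_i · h < 1 (hyperplane separation). -/

import Mathlib

open Matrix

private lemma sum_support_aux {p : ℕ} (K : Finset (Fin p)) (g f : Fin p → ℝ)
    (hf : ∀ i ∉ K, f i = 0) :
    ∑ i, g i * f i = ∑ k : K, g k * f k := by
  rw [Finset.sum_coe_sort K (fun i => g i * f i)]
  refine (Finset.sum_subset (Finset.subset_univ K) ?_).symm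
  intro i _ hi
  simp [hf i hi]

private lemma sum_support_aux' {p : ℕ} (K : Finset (Fin p)) (g f : Fin p → ℝ)
    (hf : ∀ i ∉ K, f i = 0) :
    ∑ i, f i * g i = ∑ k : K, f k * g k := by
  simp_rw [mul_comm]
  exact sum_support_aux K g f hf

private lemma symm_dot {n : Type*} [Fintype n] (A : Matrix n n ℝ) (hA : Aᵀ = A)
    (v w : n → ℝ) : v ⬝ᵥ A *ᵥ w = w ⬝ᵥ A *ᵥ v := by
  rw [dotProduct_mulVec, ← mulVec_transpose, hA, dotProduct_comm]

theorem stmt14 {p q : ℕ} (B : Matrix (Fin p) (Fin q) ℝ)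
    (Ω : Matrix (Fin q) (Fin q) ℝ) (hΩ : Ω.PosDef)
    (δ : Fin p → ℝ) (hδ : ∀ i, 0 < δ i)
    (S : Matrix (Fin p) (Fin p) ℝ)
    (hSdef : S = B * Ω * Bᵀ + Matrix.diagonal (fun i => (δ i) ^ 2))
    (w : Fin p → ℝ) (hwsum : ∑ i, w i = 1) (hnn : ∀ i, 0 ≤ w i)
    (hmin : ∀ v : Fin p → ℝ, (∑ i, v i = 1) → (∀ i, 0 ≤ v i) →
      w ⬝ᵥ S *ᵥ w ≤ v ⬝ᵥ S *ᵥ v) :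
    let K : Finset (Fin p) := Finset.univ.filter (fun i => 0 < w i)
    let SK : Matrix K K ℝ := S.submatrix (Subtype.val : K → Fin p) Subtype.val
    let BK : Matrix K (Fin q) ℝ := B.submatrix (Subtype.val : K → Fin p) id
    let h : Fin q → ℝ := Ω *ᵥ (BKᵀ *ᵥ (SK⁻¹ *ᵥ 1))
    (∀ i : Fin p, i ∉ K → 1 ≤ (fun j => B i j) ⬝ᵥ h) ∧
    (∀ i : Fin p, 0 < w i ↔ (fun j => B i j) ⬝ᵥ h < 1) := by
  intro K SK BK h
  -- S is positive definite
  have hBΩB : (B * Ω * Bᵀ).PosSemidef := by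
    have := hΩ.posSemidef.mul_mul_conjTranspose_same B
    rwa [conjTranspose_eq_transpose_of_trivial] at this
  have hSpd : S.PosDef := by
    rw [hSdef]
    exact Matrix.PosDef.posSemidef_add hBΩB (Matrix.PosDef.diagonal fun i => pow_pos (hδ i) 2)
  have hSsymm : Sᵀ = S := by
    have := hSpd.isHermitian
    rwa [Matrix.IsHermitian, conjTranspose_eq_transpose_of_trivial] at this
  -- membership in K
  have hKmem : ∀ i, i ∈ K ↔ 0 < w i := by
    intro i; simp [K]
  have hzero : ∀ i, i ∉ K → w i = 0 := by
    intro i hi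
    have := (hKmem i).not.mp hi
    exact le_antisymm (not_lt.mp this) (hnn i)
  -- KKT: first-order conditions
  have key : ∀ i j : Fin p, 0 < w j → (S *ᵥ w) j ≤ (S *ᵥ w) i := by
    intro i j hj
    rcases eq_or_ne i j with rfl | hij
    · exact le_rfl
    by_contra hcon
    push_neg at hcon
    set d : Fin p → ℝ := Pi.single i 1 - Pi.single j 1 with hd
    have hdsum : ∑ k, d k = 0 := by simp [hd, Finset.sum_sub_distrib]
    have ha : d ⬝ᵥ (S *ᵥ w) = (S *ᵥ w) i - (S *ᵥ w) j := by
      simp [hd, sub_dotProduct, dotProduct, Pi.single_apply, ite_mul, sub_mul,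
        Finset.sum_sub_distrib]
    have halt : d ⬝ᵥ (S *ᵥ w) < 0 := by rw [ha]; exact sub_neg.mpr hcon
    set a : ℝ := d ⬝ᵥ (S *ᵥ w) with haa
    set b : ℝ := d ⬝ᵥ S *ᵥ d with hb
    have hb0 : 0 ≤ b := by simpa using hSpd.posSemidef.dotProduct_mulVec_nonneg d
    set t : ℝ := min (w j) (-a / (b + 1)) with ht
    have htpos : 0 < t :=
      lt_min hj (div_pos (neg_pos.mpr halt) (by linarith))
    have htj : t ≤ w j := min_le_left _ _
    have htb : t * (b + 1) ≤ -a := by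
      have h1 : t ≤ -a / (b + 1) := min_le_right _ _
      rw [le_div_iff₀ (by linarith)] at h1
      exact h1
    set v : Fin p → ℝ := w + t • d with hv
    have hvsum : ∑ k, v k = 1 := by
      simp [hv, Finset.sum_add_distrib, hwsum, ← Finset.mul_sum, hdsum]
    have hvnn : ∀ k, 0 ≤ v k := by
      intro k
      rcases eq_or_ne k i with rfl | hki
      · have : d k = 1 := by simp [hd, Pi.single_apply, hij]
        simp only [hv, Pi.add_apply, Pi.smul_apply, this, smul_eq_mul, mul_one]
        exact add_nonneg (hnn k) htpos.le
      rcases eq_or_ne k j with rfl | hkj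
      · have : d k = -1 := by simp [hd, Pi.single_apply, hij.symm]
        simp only [hv, Pi.add_apply, Pi.smul_apply, this, smul_eq_mul, mul_neg_one]
        linarith
      · have : d k = 0 := by simp [hd, Pi.single_apply, hki, hkj]
        simp only [hv, Pi.add_apply, Pi.smul_apply, this, smul_eq_mul, mul_zero, add_zero]
        exact hnn k
    have hexp : v ⬝ᵥ S *ᵥ v = w ⬝ᵥ S *ᵥ w + 2 * t * a + t ^ 2 * b := by
      have hsd : w ⬝ᵥ S *ᵥ d = d ⬝ᵥ S *ᵥ w := symm_dot S hSsymm w d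
      simp only [hv, mulVec_add, mulVec_smul, add_dotProduct, dotProduct_add,
        smul_dotProduct, dotProduct_smul, smul_eq_mul, hsd, ← haa, ← hb]
      ring
    have := hmin v hvsum hvnn
    rw [hexp] at this
    nlinarith [htpos, halt, hb0, htb]
  set μ : ℝ := w ⬝ᵥ S *ᵥ w with hμ
  have hw0 : w ≠ 0 := by
    intro hc; rw [hc] at hwsum; simp at hwsum
  have hμpos : 0 < μ := by simpa using hSpd.dotProduct_mulVec_pos hw0
  -- (S w)_j = μ on K
  have hconst : ∀ j, 0 < w j → (S *ᵥ w) j = μ := by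
    intro j hj
    have hμ2 : μ = ∑ i, w i * (S *ᵥ w) i := by
      simp [hμ, dotProduct]
    have heach : ∀ i, w i * (S *ᵥ w) i = w i * (S *ᵥ w) j := by
      intro i
      rcases (hnn i).lt_or_eq with hi | hi
      · rw [le_antisymm (key j i hi) (key i j hj)]
      · rw [← hi]; ring
    rw [hμ2, Finset.sum_congr rfl (fun i _ => heach i), ← Finset.sum_mul, hwsum, one_mul]
  -- K is nonempty
  obtain ⟨j0, hj0⟩ : ∃ j0, 0 < w j0 := by
    by_contra hc
    push_neg at hc
    have : ∀ i, w i = 0 := fun i => le_antisymm (hc i) (hnn i)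
    rw [Finset.sum_congr rfl (fun i _ => this i)] at hwsum
    simp at hwsum
  have hge : ∀ i, i ∉ K → μ ≤ (S *ᵥ w) i := by
    intro i hi
    rw [← hconst j0 hj0]
    exact key i j0 hj0
  -- SK is positive definite
  have hSKpd : SK.PosDef := by
    rw [posDef_iff_dotProduct_mulVec]
    constructor
    · exact hSpd.isHermitian.submatrix _
    · intro x hx
      set x' : Fin p → ℝ := fun i => if hi : i ∈ K then x ⟨i, hi⟩ else 0 with hx'
      have hx'ne : x' ≠ 0 := by
        intro hc
        apply hx
        funext k
        have := congrFun hc k.1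
        simpa [hx', k.2] using this
      have hpos := hSpd.dotProduct_mulVec_pos hx'ne
      have hx'z : ∀ i ∉ K, x' i = 0 := by intro i hi; simp [hx', hi]
      have hre : star x ⬝ᵥ SK *ᵥ x = x' ⬝ᵥ S *ᵥ x' := by
        simp only [star_trivial, dotProduct, mulVec, dotProduct]
        rw [sum_support_aux' K (fun i => ∑ l, S i l * x' l) x' hx'z]
        refine (Finset.sum_congr rfl (fun k _ => ?_)).symm
        have hxk : x' k.1 = x k := by simp [hx', k.2]
        rw [hxk]
        congr 1
        rw [sum_support_aux K (fun l => S k.1 l) x' hx'z]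
        refine Finset.sum_congr rfl (fun l _ => ?_)
        have : x' l.1 = x l := by simp [hx', l.2]
        rw [this]
        rfl
      rw [hre]
      simpa using hpos
  have hSKunit : IsUnit SK.det := hSKpd.det_pos.ne'.isUnit
  -- solving for w on K
  set wK : K → ℝ := fun k => w k with hwK
  have hwz : ∀ i ∉ K, w i = 0 := hzero
  have hSKw : SK *ᵥ wK = fun _ => μ := by
    funext k
    have h1 : (SK *ᵥ wK) k = ∑ l, S k.1 l * w l := by
      simp only [mulVec, dotProduct]
      rw [sum_support_aux K (fun l => S k.1 l) w hwz]
      rfl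
    have h2 : ∑ l, S k.1 l * w l = (S *ᵥ w) k.1 := rfl
    rw [h1, h2]
    exact hconst k.1 ((hKmem k.1).mp k.2)
  have hwKeq : ∀ k : K, w k.1 = μ * (SK⁻¹ *ᵥ 1) k := by
    have h1 : SK⁻¹ *ᵥ (SK *ᵥ wK) = wK := by
      rw [mulVec_mulVec, Matrix.nonsing_inv_mul SK hSKunit, one_mulVec]
    rw [hSKw] at h1
    intro k
    have h2 := congrFun h1 k
    have h3 : (fun _ : K => μ) = μ • (1 : K → ℝ) := by funext l; simp
    rw [h3, mulVec_smul] at h2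
    simpa [hwK] using h2.symm
  -- key identity
  have keyEq : ∀ i : Fin p, μ * ((fun j => B i j) ⬝ᵥ h) = (S *ᵥ w) i - δ i ^ 2 * w i := by
    intro i
    have hBT : BKᵀ *ᵥ (μ • (SK⁻¹ *ᵥ 1)) = Bᵀ *ᵥ w := by
      funext l
      show ∑ k : K, BKᵀ l k * (μ • (SK⁻¹ *ᵥ 1)) k = ∑ i', Bᵀ l i' * w i'
      have hR : ∑ i', Bᵀ l i' * w i' = ∑ k : K, B k.1 l * w k.1 :=
        sum_support_aux K (fun i' => B i' l) w hwz
      rw [hR]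
      refine Finset.sum_congr rfl (fun k _ => ?_)
      rw [hwKeq k]
      simp only [BK, transpose_apply, submatrix_apply, id_eq, Pi.smul_apply, smul_eq_mul]
    have hmuh : μ • h = Ω *ᵥ (Bᵀ *ᵥ w) := by
      show μ • (Ω *ᵥ (BKᵀ *ᵥ (SK⁻¹ *ᵥ 1))) = Ω *ᵥ (Bᵀ *ᵥ w)
      rw [← mulVec_smul, ← mulVec_smul, hBT]
    have h2 : μ * ((fun j => B i j) ⬝ᵥ h) = (fun j => B i j) ⬝ᵥ (μ • h) := by
      rw [dotProduct_smul]; simp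
    rw [h2, hmuh]
    have h3 : (fun j => B i j) ⬝ᵥ (Ω *ᵥ (Bᵀ *ᵥ w)) = ((B * Ω * Bᵀ) *ᵥ w) i := by
      rw [mulVec_mulVec, Matrix.mul_assoc]
      conv_rhs => rw [← Matrix.mulVec_mulVec]
      rfl
    rw [h3, hSdef, add_mulVec, Pi.add_apply, mulVec_diagonal]
    ring
  -- conclusion
  have part1 : ∀ i : Fin p, i ∉ K → 1 ≤ (fun j => B i j) ⬝ᵥ h := by
    intro i hi
    have h1 := keyEq i
    rw [hzero i hi, mul_zero, sub_zero] at h1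
    have h2 : μ * 1 ≤ μ * ((fun j => B i j) ⬝ᵥ h) := by
      rw [h1, mul_one]; exact hge i hi
    exact le_of_mul_le_mul_left h2 hμpos
  refine ⟨part1, fun i => ⟨fun hi => ?_, fun hi => ?_⟩⟩
  · have h1 := keyEq i
    have h2 : (S *ᵥ w) i = μ := hconst i hi
    rw [h2] at h1
    have h3 : μ * ((fun j => B i j) ⬝ᵥ h) < μ * 1 := by
      rw [h1, mul_one]
      nlinarith [pow_pos (hδ i) 2]
    exact lt_of_mul_lt_mul_left h3 hμpos.le
  · by_contra hc
    push_neg at hc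
    have hKi : i ∉ K := by rw [hKmem]; exact fun h' => absurd h' (not_lt.mpr hc)
    exact absurd hi (not_lt.mpr (part1 i hKi))
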